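/- Let c_k be defined by: c_k = 2√(2π)·S(k)/(k+2)!! for odd k ≥ 3 (with S(k) = 1 + Σ_{j=0}^{(k−1)/2−1} (1/(2^{2j+1}(2j+3)))·C(2j+1,j) − ((k+1)/(2^k(k+2)))·C(k,(k−1)/2)) and c_k = −π²/(k+2)!! for even k ≥ 4. Then for every x > 0, c_k > 0 for odd k ≥ 3 and c_k < 0 for even k ≥ 4, i.e. the sequence (c_k x^k) is alternating in sign. -/

import Mathlib

open Real

noncomputable def Spaper (k : ℕ) : ℝ :=
  1 + (∑ j ∈ Finset.range ((k - 1) / 2),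
        1 / (2 ^ (2 * j + 1) * (2 * j + 3) : ℝ) * ((2 * j + 1).choose j : ℝ))
    - (k + 1) / (2 ^ k * (k + 2) : ℝ) * (k.choose ((k - 1) / 2) : ℝ)

open Real Nat in
noncomputable def cseq (k : ℕ) : ℝ :=
  if Odd k then 2 * Real.sqrt (2 * π) * Spaper k / ((k + 2)‼ : ℝ)
  else -π ^ 2 / ((k + 2)‼ : ℝ)

lemma Spaper_pos {k : ℕ} (hk : Odd k) : 0 < Spaper k := by
  obtain ⟨n, rfl⟩ := hk
  unfold Spaper
  have h2 : (2 * n + 1 - 1) / 2 = n := by omega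
  rw [h2]
  have h1 : (((2 * n + 1).choose n : ℕ) : ℝ) ≤ 4 ^ n := by
    exact_mod_cast Nat.choose_middle_le_pow n
  have hsum : (0:ℝ) ≤ ∑ j ∈ Finset.range n,
      1 / (2 ^ (2 * j + 1) * (2 * j + 3) : ℝ) * ((2 * j + 1).choose j : ℝ) := by
    apply Finset.sum_nonneg
    intro j _
    positivity
  have hterm : ((2 * n + 1 : ℕ) + 1 : ℝ) / (2 ^ (2 * n + 1) * ((2 * n + 1 : ℕ) + 2) : ℝ)
      * (((2 * n + 1).choose n : ℕ) : ℝ) < 1 := by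
    push_cast
    have hp : (0:ℝ) < 2 ^ (2 * n + 1) := by positivity
    have h4 : (4:ℝ) ^ n = 2 ^ (2 * n) := by
      rw [pow_mul]; norm_num
    rw [div_mul_eq_mul_div, div_lt_one (by positivity)]
    calc (2 * (n:ℝ) + 1 + 1) * (((2 * n + 1).choose n : ℕ) : ℝ)
        ≤ (2 * n + 2) * 4 ^ n := by
          have : (2 * (n:ℝ) + 1 + 1) = (2 * n + 2) := by ring
          rw [this]
          exact mul_le_mul_of_nonneg_left h1 (by positivity)
      _ = (2 * n + 2) * 2 ^ (2 * n) := by rw [h4]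
      _ < (2 * 2 ^ (2 * n)) * (2 * n + 3) := by
          have : (0:ℝ) < 2 ^ (2 * n) := by positivity
          nlinarith
      _ = 2 ^ (2 * n + 1) * (2 * (n:ℝ) + 1 + 2) := by rw [pow_succ]; ring
  linarith

theorem cseq_alternating (x : ℝ) (hx : 0 < x) (k : ℕ) :
    (Odd k → 3 ≤ k → cseq k * x ^ k > 0) ∧
      (Even k → 4 ≤ k → cseq k * x ^ k < 0) := by
  have hxk : 0 < x ^ k := pow_pos hx k
  have hdf : (0:ℝ) < (Nat.doubleFactorial (k + 2) : ℝ) := by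
    exact_mod_cast Nat.doubleFactorial_pos (k + 2)
  constructor
  · intro hodd _
    have hc : 0 < cseq k := by
      rw [cseq, if_pos hodd]
      have hs : 0 < Spaper k := Spaper_pos hodd
      have : (0:ℝ) < Real.sqrt (2 * π) := Real.sqrt_pos.mpr (by positivity)
      positivity
    positivity
  · intro heven _
    have hnodd : ¬ Odd k := by exact Nat.not_odd_iff_even.mpr heven
    have hc : cseq k < 0 := by
      rw [cseq, if_neg hnodd]
      have : (0:ℝ) < π ^ 2 := by positivity
      exact div_neg_of_neg_of_pos (by linarith) hdf
    exact mul_neg_of_neg_of_pos hc hxk
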